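/- Let λ ∈ [0,1], let α, β ∈ [0,1], ξ ≥ 0 and φ ∈ ℝ satisfy ξ² ≤ min{αβ, (1−α)(1−β)}. If y ∈ ℝ is such that the 2×2 matrix y·[[α, ξe^{iφ}],[ξe^{−iφ}, β]] − [[1, √(1−λ)],[√(1−λ), 1−λ]] is positive semidefinite, then y ≥ 2 − λ. -/

import Mathlib

open scoped Kronecker ComplexOrder
open Matrix

noncomputable section

lemma discr (a d r : ℝ) (h : ∀ t u : ℝ, 0 ≤ a*t^2 + 2*r*t*u + d*u^2) : r^2 ≤ a*d := by
  have h10 := h 1 0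
  have h01 := h 0 1
  have h1 := h r (-a)
  have h2 := h d (-r)
  have h3 := h 1 1
  have h4 := h 1 (-1)
  rcases lt_or_ge 0 (a + d) with hpos | hle
  · nlinarith [h1, h2, hpos]
  · have ha : a = 0 := by nlinarith
    have hd : d = 0 := by nlinarith
    have hr : r = 0 := by nlinarith
    simp [ha, hd, hr]

lemma subC (α β s : ℝ) (hα0 : 0 ≤ α) (hα1 : α ≤ 1) (hβ0 : 0 ≤ β) (hβ1 : β ≤ 1)
    (h1 : s^2 ≤ (1+s^2)^2*(α*β)) (h2 : s^2 ≤ (1+s^2)^2*((1-α)*(1-β))) :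
    s^2 ≤ (s^2*α*(1-β) + β*(1-α))*(1+s^2) := by
  set T := s^2 with hT
  have hT0 : 0 ≤ T := sq_nonneg s
  have hT1 : (0:ℝ) < 1 + T := by linarith
  have hid : (T*α*(1-β) + β*(1-α))*(1+T) - T = (T - β*(1+T))*(α*(1+T) - 1) := by ring
  rcases le_or_gt (β*(1+T)) T with hv | hv
  · have h5 : 0 ≤ (T - β*(1+T)) * ((1+T)^2*(α*β) - T) :=
      mul_nonneg (by linarith) (by linarith)
    rcases eq_or_lt_of_le (mul_nonneg hβ0 hT1.le) with hv0 | hv0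
    · have hβz : β = 0 := by
        rcases mul_eq_zero.1 hv0.symm with h | h
        · exact h
        · linarith
      have hTz : T = 0 := by nlinarith [h1]
      nlinarith [hid]
    · nlinarith [h5, sq_nonneg (T - β*(1+T)), hv0, hid, mul_pos hv0 hv0]
  · have hY : 1 + T - β*(1+T) < 1 := by linarith
    have hY0 : 0 ≤ 1 + T - β*(1+T) := by nlinarith
    have hX0 : 0 ≤ 1 + T - α*(1+T) := by nlinarith
    have hX : T ≤ 1 + T - α*(1+T) := by nlinarith [mul_nonneg hX0 hY0]
    have hu : α*(1+T) ≤ 1 := by linarith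
    nlinarith [hid, mul_nonneg (le_of_lt (sub_pos.2 hv)) (sub_nonneg.2 hu)]

set_option maxHeartbeats 1000000 in
lemma keyF (α β ξ s : ℝ) (hα0 : 0 ≤ α) (hα1 : α ≤ 1) (hβ0 : 0 ≤ β) (hβ1 : β ≤ 1)
    (hs : 0 ≤ s) (hξ : 0 ≤ ξ) (A1 : ξ^2 ≤ α*β) (A2 : ξ^2 ≤ (1-α)*(1-β)) :
    0 ≤ s^2*α*(1-β) + β*(1-α) + (1+s^2)*ξ^2 - 2*s*ξ := by
  set p := Real.sqrt (α*β) with hp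
  set q := Real.sqrt ((1-α)*(1-β)) with hq
  have hab : 0 ≤ α*β := mul_nonneg hα0 hβ0
  have hab' : 0 ≤ (1-α)*(1-β) := mul_nonneg (by linarith) (by linarith)
  have hp0 : 0 ≤ p := Real.sqrt_nonneg _
  have hq0 : 0 ≤ q := Real.sqrt_nonneg _
  have hp2 : p^2 = α*β := Real.sq_sqrt hab
  have hq2 : q^2 = (1-α)*(1-β) := Real.sq_sqrt hab'
  have hξp : ξ ≤ p := by nlinarith [hp2, A1, hp0]
  have hξq : ξ ≤ q := by nlinarith [hq2, A2, hq0]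
  rcases le_or_gt ((1+s^2)*p) s with hc | hc
  · have hsab : p = Real.sqrt α * Real.sqrt β := Real.sqrt_mul hα0 β
    have e1 : 0 ≤ s^2*α + β - 2*s*p := by
      nlinarith [sq_nonneg (s*Real.sqrt α - Real.sqrt β), Real.sq_sqrt hα0, Real.sq_sqrt hβ0, hsab]
    have e2 : 0 ≤ (p - ξ) * (2*s - (1+s^2)*(ξ+p)) := by
      apply mul_nonneg (by linarith)
      nlinarith [mul_le_mul_of_nonneg_left hξp (show (0:ℝ) ≤ 1+s^2 by positivity)]
    have hp2' : (1+s^2)*p^2 = (1+s^2)*(α*β) := by rw [hp2]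
    linarith [e1, e2, hp2']
  · rcases le_or_gt ((1+s^2)*q) s with hd | hd
    · have hsab : q = Real.sqrt (1-α) * Real.sqrt (1-β) := Real.sqrt_mul (by linarith) _
      have e1 : 0 ≤ s^2*(1-β) + (1-α) - 2*s*q := by
        nlinarith [sq_nonneg (s*Real.sqrt (1-β) - Real.sqrt (1-α)),
          Real.sq_sqrt (show (0:ℝ) ≤ 1-α by linarith), Real.sq_sqrt (show (0:ℝ) ≤ 1-β by linarith), hsab]
      have e2 : 0 ≤ (q - ξ) * (2*s - (1+s^2)*(ξ+q)) := by
        apply mul_nonneg (by linarith)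
        nlinarith [mul_le_mul_of_nonneg_left hξq (show (0:ℝ) ≤ 1+s^2 by positivity)]
      have hq2' : (1+s^2)*q^2 = (1+s^2)*((1-α)*(1-β)) := by rw [hq2]
      linarith [e1, e2, hq2']
    · have hb1 : s^2 ≤ (1+s^2)^2*(α*β) := by
        calc s^2 = s*s := sq s
        _ ≤ ((1+s^2)*p)*((1+s^2)*p) := mul_self_le_mul_self hs hc.le
        _ = (1+s^2)^2*p^2 := by ring
        _ = (1+s^2)^2*(α*β) := by rw [hp2]
      have hb2 : s^2 ≤ (1+s^2)^2*((1-α)*(1-β)) := by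
        calc s^2 = s*s := sq s
        _ ≤ ((1+s^2)*q)*((1+s^2)*q) := mul_self_le_mul_self hs hd.le
        _ = (1+s^2)^2*q^2 := by ring
        _ = (1+s^2)^2*((1-α)*(1-β)) := by rw [hq2]
      have hC := subC α β s hα0 hα1 hβ0 hβ1 hb1 hb2
      have hpos : (0:ℝ) < 1+s^2 := by positivity
      have h9 : 0 ≤ (s^2*α*(1-β) + β*(1-α) + (1+s^2)*ξ^2 - 2*s*ξ) * (1+s^2) := by
        have hsq := sq_nonneg ((1+s^2)*ξ - s)
        nlinarith [hC, hsq]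
      exact nonneg_of_mul_nonneg_right (by linarith [h9]) hpos

lemma core (α β ξ s y : ℝ) (hα0 : 0 ≤ α) (hα1 : α ≤ 1) (hβ0 : 0 ≤ β) (hβ1 : β ≤ 1)
    (hs : 0 ≤ s) (hξ : 0 ≤ ξ) (A1 : ξ^2 ≤ α*β) (A2 : ξ^2 ≤ (1-α)*(1-β))
    (h1 : 0 ≤ y*α - 1) (h2 : 0 ≤ y*β - s^2)
    (h3 : (y*ξ - s)^2 ≤ (y*α - 1)*(y*β - s^2)) :
    1 + s^2 ≤ y := by
  have hαpos : 0 < α := by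
    rcases lt_or_eq_of_le hα0 with h | h
    · exact h
    · exfalso; rw [← h] at h1; norm_num at h1
  have hy : 0 < y := by nlinarith
  have hF := keyF α β ξ s hα0 hα1 hβ0 hβ1 hs hξ A1 A2
  have hG : 0 ≤ y*(α*β - ξ^2) + 2*s*ξ - α*s^2 - β := by
    have hyG : 0 ≤ y * (y*(α*β - ξ^2) + 2*s*ξ - α*s^2 - β) := by nlinarith [h3]
    exact nonneg_of_mul_nonneg_right hyG hy
  have hGF : 0 ≤ (y - (1+s^2))*(α*β - ξ^2) := by nlinarith [hG, hF]
  rcases eq_or_lt_of_le A1 with hEq | hLt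
  · have hG' : 0 ≤ 2*s*ξ - α*s^2 - β := by nlinarith [hG, hEq]
    have hamgm : α*s^2 + β - 2*s*ξ ≥ 0 := by nlinarith [sq_nonneg (α*s^2 - β), hEq, sq_nonneg (s*ξ)]
    have heq2 : 2*s*ξ = α*s^2 + β := by linarith
    have hβeq : β = α*s^2 := by nlinarith [hEq]
    have hξeq : ξ^2 = α^2*s^2 := by rw [hβeq] at hEq; linear_combination hEq
    have hαb : α*(1+s^2) ≤ 1 := by nlinarith [A2, hξeq, hβeq]
    have : α*(1+s^2) ≤ y*α := by linarith
    nlinarith [this, hαpos]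
  · have := nonneg_of_mul_nonneg_right (by linarith [hGF] :
      0 ≤ (α*β - ξ^2) * (y - (1+s^2))) (by linarith : (0:ℝ) < α*β - ξ^2)
    linarith

lemma quad2 (a b : ℝ) (c w : ℂ) (hw : w * (starRingEnd ℂ) w = 1)
    (h : (!![(a:ℂ), c; (starRingEnd ℂ) c, (b:ℂ)]).PosSemidef) (t u : ℝ) :
    0 ≤ a*t^2 + 2*(c*w).re*t*u + b*u^2 := by
  have hx := (Matrix.posSemidef_iff_dotProduct_mulVec.mp h).2 ![(t:ℂ), (u:ℂ)*w]
  simp [dotProduct, Matrix.mulVec, Fin.sum_univ_two] at hx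
  have h2 : c*w + (starRingEnd ℂ) c * (starRingEnd ℂ) w = 2*((c*w).re:ℂ) := by
    rw [← _root_.map_mul, Complex.add_conj]; push_cast; ring
  have hz : (t:ℂ) * (↑a * ↑t + c * (↑u * w)) + ↑u * (starRingEnd ℂ) w * ((starRingEnd ℂ) c * ↑t + ↑b * (↑u * w))
      = ((a*t^2 + 2*(c*w).re*t*u + b*u^2 : ℝ) : ℂ) := by
    push_cast
    linear_combination ((t:ℂ)*(u:ℂ))*h2 + ((b:ℂ)*(u:ℂ)^2)*hw
  rw [hz] at hx
  exact_mod_cast Complex.zero_le_real.mp hx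

/-- If `y·[[α, ξe^{iφ}],[ξe^{−iφ}, β]] − [[1, √(1−λ)],[√(1−λ), 1−λ]]` is
positive semidefinite under the stated constraints, then `y ≥ 2 − λ`. -/
theorem stmt4 (l α β ξ φ y : ℝ)
    (hl : l ∈ Set.Icc (0:ℝ) 1) (hα : α ∈ Set.Icc (0:ℝ) 1) (hβ : β ∈ Set.Icc (0:ℝ) 1)
    (hξ : 0 ≤ ξ) (hξ2 : ξ ^ 2 ≤ min (α * β) ((1 - α) * (1 - β)))
    (hpsd : (y • !![(α : ℂ), (ξ : ℂ) * Complex.exp (Complex.I * φ);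
                    (ξ : ℂ) * Complex.exp (-(Complex.I * φ)), (β : ℂ)]
        - !![(1 : ℂ), ((Real.sqrt (1 - l) : ℝ) : ℂ);
             ((Real.sqrt (1 - l) : ℝ) : ℂ), ((1 - l : ℝ) : ℂ)]).PosSemidef) :
    2 - l ≤ y := by
  obtain ⟨hl0, hl1⟩ := hl
  obtain ⟨hα0, hα1⟩ := hα
  obtain ⟨hβ0, hβ1⟩ := hβ
  set s : ℝ := Real.sqrt (1 - l) with hs
  have hs0 : 0 ≤ s := Real.sqrt_nonneg _
  have hs2 : s^2 = 1 - l := Real.sq_sqrt (by linarith)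
  set c : ℂ := (y:ℂ) * ξ * Complex.exp (Complex.I * φ) - (s:ℂ) with hc
  have hconj : (starRingEnd ℂ) c = (y:ℂ) * ξ * Complex.exp (-(Complex.I * φ)) - (s:ℂ) := by
    simp only [hc, map_sub, _root_.map_mul, Complex.conj_ofReal, ← Complex.exp_conj]
    congr 2
    simp [Complex.conj_I, Complex.conj_ofReal]
  have hM : (y • !![(α : ℂ), (ξ : ℂ) * Complex.exp (Complex.I * φ);
                    (ξ : ℂ) * Complex.exp (-(Complex.I * φ)), (β : ℂ)]
        - !![(1 : ℂ), ((s : ℝ) : ℂ); ((s : ℝ) : ℂ), ((1 - l : ℝ) : ℂ)])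
      = !![((y*α - 1 : ℝ):ℂ), c; (starRingEnd ℂ) c, ((y*β - (1-l) : ℝ):ℂ)] := by
    rw [hconj]
    ext i j
    fin_cases i <;> fin_cases j <;>
      simp [hc, Matrix.smul_apply] <;> push_cast <;> ring
  rw [hM] at hpsd
  -- two quadratic families
  have hE : Complex.exp (-(Complex.I * φ)) * (starRingEnd ℂ) (Complex.exp (-(Complex.I * φ))) = 1 := by
    rw [← Complex.exp_conj]
    rw [← Complex.exp_add]
    have : (starRingEnd ℂ) (-(Complex.I * φ)) = Complex.I * φ := by
      simp [Complex.conj_I, Complex.conj_ofReal]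
    rw [this, neg_add_cancel, Complex.exp_zero]
  have hre2 : (c * 1).re = y*ξ*Real.cos φ - s := by
    simp [hc, Complex.exp_re, Complex.exp_im, Complex.mul_re, Complex.mul_im]
  have hcw : c * Complex.exp (-(Complex.I * φ)) = (y:ℂ)*ξ - (s:ℂ)*Complex.exp (-(Complex.I * φ)) := by
    have hEE : Complex.exp (Complex.I * φ) * Complex.exp (-(Complex.I * φ)) = 1 := by
      rw [← Complex.exp_add, add_neg_cancel, Complex.exp_zero]
    rw [hc]; linear_combination ((y:ℂ)*(ξ:ℂ)) * hEE
  have hre1 : (c * Complex.exp (-(Complex.I * φ))).re = y*ξ - s*Real.cos φ := by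
    rw [hcw]
    simp [Complex.exp_re, Complex.exp_im, Complex.mul_re, Complex.mul_im]
  have key1 : ∀ t u : ℝ, 0 ≤ (y*α - 1)*t^2 + 2*(y*ξ - s*Real.cos φ)*t*u + (y*β - (1-l))*u^2 := by
    intro t u
    have := quad2 (y*α - 1) (y*β - (1-l)) c (Complex.exp (-(Complex.I * φ))) hE hpsd t u
    rwa [hre1] at this
  have key2 : ∀ t u : ℝ, 0 ≤ (y*α - 1)*t^2 + 2*(y*ξ*Real.cos φ - s)*t*u + (y*β - (1-l))*u^2 := by
    intro t u
    have := quad2 (y*α - 1) (y*β - (1-l)) c 1 (by simp) hpsd t u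
    rwa [hre2] at this
  have ha : 0 ≤ y*α - 1 := by have := key1 1 0; linarith
  have hd : 0 ≤ y*β - (1-l) := by have := key1 0 1; linarith
  have hr1 := discr _ _ _ key1
  have hr2 := discr _ _ _ key2
  have hy : 0 < y := by nlinarith [ha]
  have hcos1 : Real.cos φ ≤ 1 := Real.cos_le_one φ
  have hcos2 : -1 ≤ Real.cos φ := Real.neg_one_le_cos φ
  have hyξ : 0 ≤ y*ξ := mul_nonneg hy.le hξ
  have hkey : (y*ξ - s)^2 ≤ (y*α - 1)*(y*β - (1-l)) := by
    rcases le_total (y*ξ) s with h | h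
    · refine le_trans ?_ hr2
      have e0 : 0 ≤ 2*s - y*ξ*(1+Real.cos φ) := by
        have := mul_nonneg hyξ (by linarith : 0 ≤ 1 - Real.cos φ)
        nlinarith [this]
      have e : 0 ≤ (y*ξ*(1-Real.cos φ)) * (2*s - y*ξ*(1+Real.cos φ)) :=
        mul_nonneg (mul_nonneg hyξ (by linarith)) e0
      nlinarith [e]
    · refine le_trans ?_ hr1
      have e : 0 ≤ (s*(1-Real.cos φ)) * (2*(y*ξ) - s*(1+Real.cos φ)) :=
        mul_nonneg (mul_nonneg hs0 (by linarith)) (by nlinarith [mul_nonneg hs0 (by linarith : 0 ≤ 1 - Real.cos φ)])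
      nlinarith [e]
  have hcore := core α β ξ s y hα0 hα1 hβ0 hβ1 hs0 hξ
    (hξ2.trans (min_le_left _ _)) (hξ2.trans (min_le_right _ _))
    ha (by rw [hs2]; exact hd) (by rw [hs2]; exact hkey)
  linarith [hcore, hs2.ge, hs2.le]
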